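/- For all integers p, q with p ≥ 3 and q ≥ p + 2, the matrix Q_{I-I}(p, q), regarded as a real symmetric matrix, has exactly q−1 positive eigenvalues and exactly q−1 negative eigenvalues, counted with multiplicity; in particular its signature is 0. -/

import Mathlib

open Matrix

/-- Entry of the tridiagonal pattern: 2 on the diagonal, -1 adjacent to it, 0 elsewhere. -/
def triEnt (i j : ℕ) : ℤ :=
  if i = j then 2 else if i + 1 = j ∨ j + 1 = i then -1 else 0

/-- The (1-indexed) entry of the intersection matrix `Q_{I-I}(p, q)`:
the principal submatrix on indices 1,…,p−2 is J_{p−2}; on indices p−1,…,q−3 it is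
J_{q−p−1}; on indices q−2,…,2q−4 it is −J_{q−1}; writing α = 2q−3 and β = 2q−2,
the entry (α, α) is 2, the entry (β, β) is 0, the entries (α, p−2), (p−2, α),
(α, p−1), (p−1, α), (β, q−3), (q−3, β) are 1, the entries (β, q−2) and (q−2, β)
are −1, and all other entries (including (α, β) and (β, α)) are 0. -/
def QIIent (p q i j : ℕ) : ℤ :=
  if i ≤ p - 2 ∧ j ≤ p - 2 then triEnt i j
  else if p - 1 ≤ i ∧ i ≤ q - 3 ∧ p - 1 ≤ j ∧ j ≤ q - 3 then triEnt i j
  else if q - 2 ≤ i ∧ i ≤ 2*q - 4 ∧ q - 2 ≤ j ∧ j ≤ 2*q - 4 then -(triEnt i j)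
  else if i = 2*q - 3 ∧ j = 2*q - 3 then 2
  else if (i = 2*q - 3 ∧ (j = p - 2 ∨ j = p - 1)) ∨ (j = 2*q - 3 ∧ (i = p - 2 ∨ i = p - 1)) then 1
  else if (i = 2*q - 2 ∧ j = q - 3) ∨ (j = 2*q - 2 ∧ i = q - 3) then 1
  else if (i = 2*q - 2 ∧ j = q - 2) ∨ (j = 2*q - 2 ∧ i = q - 2) then -1
  else 0

/-- The intersection matrix `Q_{I-I}(p, q)`, of size (2q−2)×(2q−2). -/
def QI_I (p q : ℕ) : Matrix (Fin (2*q - 2)) (Fin (2*q - 2)) ℤ :=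
  fun i j => QIIent p q (i.val + 1) (j.val + 1)


open Finset

def cc (k b : ℕ) : ℝ := if b ≤ k then ((b + 1 : ℕ) : ℝ) else 0

/-- reversed chain: entries m, m-1, ..., 1 at positions 0..m-1 -/
def rr (m b : ℕ) : ℝ := if b < m then ((m - b : ℕ) : ℝ) else 0

/-- shift a vector by s -/
def sh (s : ℕ) (f : ℕ → ℝ) (b : ℕ) : ℝ := if s ≤ b then f (b - s) else 0

/-- delta vector at t -/
def dd (t b : ℕ) : ℝ := if b = t then 1 else 0

lemma triEnt_shift (s a b : ℕ) : triEnt (a + 1 + s) (b + 1 + s) = triEnt (a + 1) (b + 1) := by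
  unfold triEnt; split_ifs <;> omega

lemma triEnt_comm (i j : ℕ) : triEnt i j = triEnt j i := by
  unfold triEnt; split_ifs <;> omega

lemma tri_row (n a : ℕ) (ha : a < n) (c : ℕ → ℝ) :
    ∑ b ∈ Finset.range n, ((triEnt (a + 1) (b + 1) : ℤ) : ℝ) * c b
      = 2 * c a - (if a = 0 then 0 else c (a - 1)) - (if a + 1 < n then c (a + 1) else 0) := by
  have hsplit : ∀ b, ((triEnt (a + 1) (b + 1) : ℤ) : ℝ) * c b
      = (if b = a then 2 * c b else 0) + (if a ≠ 0 ∧ b = a - 1 then -c b else 0)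
        + (if b = a + 1 then -c b else 0) := by
    intro b
    unfold triEnt
    split_ifs
    all_goals try (exfalso; omega)
    all_goals push_cast; ring
  rw [Finset.sum_congr rfl fun b _ => hsplit b]
  rw [Finset.sum_add_distrib, Finset.sum_add_distrib]
  rw [Finset.sum_ite_eq' (Finset.range n) a (fun b => 2 * c b)]
  rw [Finset.sum_ite_eq' (Finset.range n) (a + 1) (fun b => -c b)]
  have h2 : ∑ b ∈ Finset.range n, (if a ≠ 0 ∧ b = a - 1 then -c b else 0)
      = if a = 0 then 0 else -c (a - 1) := by
    by_cases ha0 : a = 0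
    · simp [ha0]
    · rw [if_neg ha0]
      have : ∀ b, (if a ≠ 0 ∧ b = a - 1 then -c b else 0) = (if b = a - 1 then -c b else 0) := by
        intro b; split_ifs <;> first | rfl | (exfalso; omega)
      rw [Finset.sum_congr rfl fun b _ => this b,
        Finset.sum_ite_eq' (Finset.range n) (a - 1) (fun b => -c b),
        if_pos (Finset.mem_range.2 (by omega))]
  rw [h2, if_pos (Finset.mem_range.2 ha)]
  by_cases h3 : a + 1 < n
  · rw [if_pos (Finset.mem_range.2 h3), if_pos h3]
    by_cases ha0 : a = 0 <;> simp [ha0] <;> ring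
  · rw [if_neg (fun hmem => h3 (Finset.mem_range.1 hmem)), if_neg h3]
    by_cases ha0 : a = 0 <;> simp [ha0] <;> ring

lemma cc_le (k x : ℕ) (h : x ≤ k) : cc k x = (x : ℝ) + 1 := by
  unfold cc; rw [if_pos h]; push_cast; ring

lemma cc_gt (k x : ℕ) (h : k < x) : cc k x = 0 := by
  unfold cc; rw [if_neg (by omega)]

lemma rr_lt (m x : ℕ) (h : x < m) : rr m x = (m : ℝ) - (x : ℝ) := by
  unfold rr; rw [if_pos h]; push_cast [Nat.cast_sub (le_of_lt h)]; ring

lemma rr_ge (m x : ℕ) (h : m ≤ x) : rr m x = 0 := by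
  unfold rr; rw [if_neg (by omega)]

lemma tri_chain_row (n k a : ℕ) (hk : k < n) (ha : a < n) :
    ∑ b ∈ Finset.range n, ((triEnt (a + 1) (b + 1) : ℤ) : ℝ) * cc k b
      = if a = k then (k : ℝ) + 2 else if a = k + 1 then -((k : ℝ) + 1) else 0 := by
  rw [tri_row n a ha]
  have e1 : ∀ x, x ≤ k → cc k x = (x : ℝ) + 1 := cc_le k
  have e2 : ∀ x, k < x → cc k x = 0 := cc_gt k
  rcases lt_trichotomy a k with h | h | h
  · rw [if_neg (show ¬(a = k) by omega), if_neg (show ¬(a = k + 1) by omega),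
      if_pos (show a + 1 < n by omega), e1 a (by omega), e1 (a + 1) (by omega)]
    by_cases ha0 : a = 0
    · rw [if_pos ha0]; subst ha0; push_cast; ring
    · rw [if_neg ha0, e1 (a - 1) (by omega)]
      push_cast [Nat.cast_sub (show 1 ≤ a by omega)]; ring
  · subst h
    rw [if_pos rfl, e1 a le_rfl]
    have hc1 : (if a + 1 < n then cc a (a + 1) else 0) = 0 := by
      split_ifs with h'
      · exact e2 (a + 1) (by omega)
      · rfl
    rw [hc1]
    by_cases ha0 : a = 0
    · rw [if_pos ha0]; subst ha0; push_cast; ring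
    · rw [if_neg ha0, e1 (a - 1) (by omega)]
      push_cast [Nat.cast_sub (show 1 ≤ a by omega)]; ring
  · rw [if_neg (show ¬(a = k) by omega), e2 a (by omega)]
    have hc1 : (if a + 1 < n then cc k (a + 1) else 0) = 0 := by
      split_ifs with h'
      · exact e2 (a + 1) (by omega)
      · rfl
    rw [hc1, if_neg (show ¬(a = 0) by omega)]
    by_cases h2 : a = k + 1
    · rw [if_pos h2, e1 (a - 1) (by omega), show a - 1 = k by omega]
      ring
    · rw [if_neg h2, e2 (a - 1) (by omega)]
      ring

lemma tri_rev_row (m a : ℕ) (ha : a < m) :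
    ∑ b ∈ Finset.range m, ((triEnt (a + 1) (b + 1) : ℤ) : ℝ) * rr m b
      = if a = 0 then (m : ℝ) + 1 else 0 := by
  rw [tri_row m a ha]
  by_cases ha0 : a = 0
  · rw [if_pos ha0, if_pos ha0]
    subst ha0
    rw [rr_lt m 0 (by omega)]
    by_cases h1 : 1 < m
    · rw [if_pos h1, rr_lt m 1 h1]; push_cast; ring
    · rw [if_neg h1]
      have hm1 : m = 1 := by omega
      subst hm1; push_cast; ring
  · rw [if_neg ha0, if_neg ha0, rr_lt m a ha, rr_lt m (a - 1) (by omega)]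
    by_cases h1 : a + 1 < m
    · rw [if_pos h1, rr_lt m (a + 1) h1]
      push_cast [Nat.cast_sub (show 1 ≤ a by omega)]; ring
    · rw [if_neg h1]
      have hm : m = a + 1 := by omega
      subst hm
      push_cast [Nat.cast_sub (show 1 ≤ a by omega)]; ring

-- local double-sum pairing lemmas

lemma inner_pull (n : ℕ) (x : ℝ) (f g : ℕ → ℝ) :
    ∑ b ∈ Finset.range n, x * f b * g b = x * ∑ b ∈ Finset.range n, f b * g b := by
  rw [Finset.mul_sum]
  exact Finset.sum_congr rfl fun b _ => by ring

lemma loc_chain_chain (n k l : ℕ) (hk : k < n) (hl : l < n) :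
    ∑ a ∈ Finset.range n, ∑ b ∈ Finset.range n,
        cc l a * ((triEnt (a + 1) (b + 1) : ℤ) : ℝ) * cc k b
      = if l = k then ((k : ℝ) + 1) * ((k : ℝ) + 2) else 0 := by
  have hinner : ∀ a ∈ Finset.range n, ∑ b ∈ Finset.range n,
      cc l a * ((triEnt (a + 1) (b + 1) : ℤ) : ℝ) * cc k b
      = (if a = k then cc l a * ((k : ℝ) + 2) else 0)
        + (if a = k + 1 then -(cc l a * ((k : ℝ) + 1)) else 0) := by
    intro a ha
    rw [inner_pull, tri_chain_row n k a hk (Finset.mem_range.1 ha)]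
    split_ifs <;> first | (exfalso; omega) | ring
  rw [Finset.sum_congr rfl hinner, Finset.sum_add_distrib,
    Finset.sum_ite_eq' (Finset.range n) k (fun a => cc l a * ((k : ℝ) + 2)),
    Finset.sum_ite_eq' (Finset.range n) (k + 1) (fun a => -(cc l a * ((k : ℝ) + 1))),
    if_pos (Finset.mem_range.2 hk)]
  rcases lt_trichotomy l k with h | h | h
  · rw [if_neg (show ¬(l = k) by omega), cc_gt l k h]
    have : ∀ hm : k + 1 ∈ Finset.range n, -(cc l (k + 1) * ((k : ℝ) + 1)) = 0 := by
      intro _; rw [cc_gt l (k + 1) (by omega)]; ring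
    split_ifs with hm
    · rw [this hm]; ring
    · ring
  · subst h
    rw [if_pos rfl, cc_le l l le_rfl]
    split_ifs with hm
    · rw [cc_gt l (l + 1) (by omega)]; ring
    · ring
  · rw [if_neg (show ¬(l = k) by omega), cc_le l k (by omega),
      if_pos (Finset.mem_range.2 (show k + 1 < n by omega)), cc_le l (k + 1) (by omega)]
    push_cast; ring

lemma loc_chain_rev (n k : ℕ) (hk : k < n) :
    ∑ a ∈ Finset.range n, ∑ b ∈ Finset.range n,
        cc k a * ((triEnt (a + 1) (b + 1) : ℤ) : ℝ) * rr n b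
      = (n : ℝ) + 1 := by
  have hinner : ∀ a ∈ Finset.range n, ∑ b ∈ Finset.range n,
      cc k a * ((triEnt (a + 1) (b + 1) : ℤ) : ℝ) * rr n b
      = if a = 0 then cc k a * ((n : ℝ) + 1) else 0 := by
    intro a ha
    rw [inner_pull, tri_rev_row n a (Finset.mem_range.1 ha)]
    split_ifs <;> ring
  rw [Finset.sum_congr rfl hinner,
    Finset.sum_ite_eq' (Finset.range n) 0 (fun a => cc k a * ((n : ℝ) + 1)),
    if_pos (Finset.mem_range.2 (by omega)), cc_le k 0 (by omega)]
  push_cast; ring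

lemma loc_rev_chain (n k : ℕ) (hk : k < n) :
    ∑ a ∈ Finset.range n, ∑ b ∈ Finset.range n,
        rr n a * ((triEnt (a + 1) (b + 1) : ℤ) : ℝ) * cc k b
      = (n : ℝ) + 1 := by
  have hinner : ∀ a ∈ Finset.range n, ∑ b ∈ Finset.range n,
      rr n a * ((triEnt (a + 1) (b + 1) : ℤ) : ℝ) * cc k b
      = (if a = k then rr n a * ((k : ℝ) + 2) else 0)
        + (if a = k + 1 then -(rr n a * ((k : ℝ) + 1)) else 0) := by
    intro a ha
    rw [inner_pull, tri_chain_row n k a hk (Finset.mem_range.1 ha)]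
    split_ifs <;> first | (exfalso; omega) | ring
  rw [Finset.sum_congr rfl hinner, Finset.sum_add_distrib,
    Finset.sum_ite_eq' (Finset.range n) k (fun a => rr n a * ((k : ℝ) + 2)),
    Finset.sum_ite_eq' (Finset.range n) (k + 1) (fun a => -(rr n a * ((k : ℝ) + 1))),
    if_pos (Finset.mem_range.2 hk), rr_lt n k hk]
  by_cases hm : k + 1 < n
  · rw [if_pos (Finset.mem_range.2 hm), rr_lt n (k + 1) hm]
    push_cast; ring
  · rw [if_neg (fun hmem => hm (Finset.mem_range.1 hmem))]
    have : n = k + 1 := by omega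
    have hcast : (n : ℝ) = (k : ℝ) + 1 := by exact_mod_cast congrArg (Nat.cast : ℕ → ℝ) this
    rw [hcast]; ring

lemma loc_rev_rev (n : ℕ) (hn : 0 < n) :
    ∑ a ∈ Finset.range n, ∑ b ∈ Finset.range n,
        rr n a * ((triEnt (a + 1) (b + 1) : ℤ) : ℝ) * rr n b
      = (n : ℝ) * ((n : ℝ) + 1) := by
  have hinner : ∀ a ∈ Finset.range n, ∑ b ∈ Finset.range n,
      rr n a * ((triEnt (a + 1) (b + 1) : ℤ) : ℝ) * rr n b
      = if a = 0 then rr n a * ((n : ℝ) + 1) else 0 := by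
    intro a ha
    rw [inner_pull, tri_rev_row n a (Finset.mem_range.1 ha)]
    split_ifs <;> ring
  rw [Finset.sum_congr rfl hinner,
    Finset.sum_ite_eq' (Finset.range n) 0 (fun a => rr n a * ((n : ℝ) + 1)),
    if_pos (Finset.mem_range.2 hn), rr_lt n 0 hn]
  push_cast; ring
section Entries

variable {p q : ℕ} (hp : 3 ≤ p) (hq : p + 2 ≤ q)

include hp hq

lemma QB1 {a b : ℕ} (ha : a < p - 2) (hb : b < p - 2) :
    QIIent p q (a + 1) (b + 1) = triEnt (a + 1) (b + 1) := by
  unfold QIIent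
  rw [if_pos ⟨by omega, by omega⟩]

lemma QB2 {a b : ℕ} (ha : a < q - p - 1) (hb : b < q - p - 1) :
    QIIent p q (p - 1 + a) (p - 1 + b) = triEnt (a + 1) (b + 1) := by
  unfold QIIent
  rw [if_neg (by omega), if_pos ⟨by omega, by omega, by omega, by omega⟩,
    show p - 1 + a = a + 1 + (p - 2) by omega, show p - 1 + b = b + 1 + (p - 2) by omega,
    triEnt_shift]

lemma QB3 {a b : ℕ} (ha : a < q - 1) (hb : b < q - 1) :
    QIIent p q (q - 2 + a) (q - 2 + b) = -(triEnt (a + 1) (b + 1)) := by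
  unfold QIIent
  rw [if_neg (by omega), if_neg (by omega),
    if_pos ⟨by omega, by omega, by omega, by omega⟩,
    show q - 2 + a = a + 1 + (q - 3) by omega, show q - 2 + b = b + 1 + (q - 3) by omega,
    triEnt_shift]

lemma Z12 {a b : ℕ} (ha : a < p - 2) (hb : b < q - p - 1) :
    QIIent p q (a + 1) (p - 1 + b) = 0 := by
  unfold QIIent
  rw [if_neg (by omega), if_neg (by omega), if_neg (by omega), if_neg (by omega),
    if_neg (by omega), if_neg (by omega), if_neg (by omega)]

lemma Z13 {a b : ℕ} (ha : a < p - 2) (hb : b < q - 1) :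
    QIIent p q (a + 1) (q - 2 + b) = 0 := by
  unfold QIIent
  rw [if_neg (by omega), if_neg (by omega), if_neg (by omega), if_neg (by omega),
    if_neg (by omega), if_neg (by omega), if_neg (by omega)]

lemma Z23 {a b : ℕ} (ha : a < q - p - 1) (hb : b < q - 1) :
    QIIent p q (p - 1 + a) (q - 2 + b) = 0 := by
  unfold QIIent
  rw [if_neg (by omega), if_neg (by omega), if_neg (by omega), if_neg (by omega),
    if_neg (by omega), if_neg (by omega), if_neg (by omega)]

lemma Ralpha {b : ℕ} (hb : b < 2*q - 2) :
    ((QIIent p q (2*q - 3) (b + 1) : ℤ) : ℝ)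
      = (if b = 2*q - 4 then 2 else 0) + (if b = p - 3 then 1 else 0)
        + (if b = p - 2 then 1 else 0) := by
  unfold QIIent
  split_ifs
  all_goals try (exfalso; omega)
  all_goals push_cast; ring

lemma Rbeta {b : ℕ} (hb : b < 2*q - 2) :
    ((QIIent p q (2*q - 2) (b + 1) : ℤ) : ℝ)
      = (if b = q - 4 then 1 else 0) + (if b = q - 3 then -1 else 0) := by
  unfold QIIent
  split_ifs
  all_goals try (exfalso; omega)
  all_goals push_cast; ring

end Entries

lemma QIIent_comm (p q i j : ℕ) : QIIent p q i j = QIIent p q j i := by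
  unfold QIIent
  by_cases h1 : i ≤ p - 2 ∧ j ≤ p - 2
  · rw [if_pos h1, if_pos (show j ≤ p - 2 ∧ i ≤ p - 2 by omega)]
    exact triEnt_comm i j
  rw [if_neg h1, if_neg (show ¬(j ≤ p - 2 ∧ i ≤ p - 2) by omega)]
  by_cases h2 : p - 1 ≤ i ∧ i ≤ q - 3 ∧ p - 1 ≤ j ∧ j ≤ q - 3
  · rw [if_pos h2, if_pos (show p - 1 ≤ j ∧ j ≤ q - 3 ∧ p - 1 ≤ i ∧ i ≤ q - 3 by omega)]
    exact triEnt_comm i j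
  rw [if_neg h2, if_neg (show ¬(p - 1 ≤ j ∧ j ≤ q - 3 ∧ p - 1 ≤ i ∧ i ≤ q - 3) by omega)]
  by_cases h3 : q - 2 ≤ i ∧ i ≤ 2*q - 4 ∧ q - 2 ≤ j ∧ j ≤ 2*q - 4
  · rw [if_pos h3, if_pos (show q - 2 ≤ j ∧ j ≤ 2*q - 4 ∧ q - 2 ≤ i ∧ i ≤ 2*q - 4 by omega)]
    exact congrArg Neg.neg (triEnt_comm i j)
  rw [if_neg h3, if_neg (show ¬(q - 2 ≤ j ∧ j ≤ 2*q - 4 ∧ q - 2 ≤ i ∧ i ≤ 2*q - 4) by omega)]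
  by_cases h4 : i = 2*q - 3 ∧ j = 2*q - 3
  · rw [if_pos h4, if_pos (show j = 2*q - 3 ∧ i = 2*q - 3 by omega)]
  rw [if_neg h4, if_neg (show ¬(j = 2*q - 3 ∧ i = 2*q - 3) by omega)]
  by_cases h5 : (i = 2*q - 3 ∧ (j = p - 2 ∨ j = p - 1)) ∨ (j = 2*q - 3 ∧ (i = p - 2 ∨ i = p - 1))
  · rw [if_pos h5, if_pos (show (j = 2*q - 3 ∧ (i = p - 2 ∨ i = p - 1)) ∨
      (i = 2*q - 3 ∧ (j = p - 2 ∨ j = p - 1)) by omega)]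
  rw [if_neg h5, if_neg (show ¬((j = 2*q - 3 ∧ (i = p - 2 ∨ i = p - 1)) ∨
    (i = 2*q - 3 ∧ (j = p - 2 ∨ j = p - 1))) by omega)]
  by_cases h6 : (i = 2*q - 2 ∧ j = q - 3) ∨ (j = 2*q - 2 ∧ i = q - 3)
  · rw [if_pos h6, if_pos (show (j = 2*q - 2 ∧ i = q - 3) ∨ (i = 2*q - 2 ∧ j = q - 3) by omega)]
  rw [if_neg h6, if_neg (show ¬((j = 2*q - 2 ∧ i = q - 3) ∨ (i = 2*q - 2 ∧ j = q - 3)) by omega)]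
  by_cases h7 : (i = 2*q - 2 ∧ j = q - 2) ∨ (j = 2*q - 2 ∧ i = q - 2)
  · rw [if_pos h7, if_pos (show (j = 2*q - 2 ∧ i = q - 2) ∨ (i = 2*q - 2 ∧ j = q - 2) by omega)]
  rw [if_neg h7, if_neg (show ¬((j = 2*q - 2 ∧ i = q - 2) ∨ (i = 2*q - 2 ∧ j = q - 2)) by omega)]

/-- The bilinear form of `Q_{I-I}(p,q)` on ℕ-indexed vectors. -/
def Bnq (p q : ℕ) (v w : ℕ → ℝ) : ℝ :=
  ∑ a ∈ Finset.range (2*q - 2), ∑ b ∈ Finset.range (2*q - 2),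
    v a * ((QIIent p q (a + 1) (b + 1) : ℤ) : ℝ) * w b

lemma Bnq_symm (p q : ℕ) (v w : ℕ → ℝ) : Bnq p q v w = Bnq p q w v := by
  unfold Bnq
  rw [Finset.sum_comm]
  exact Finset.sum_congr rfl fun a _ => Finset.sum_congr rfl fun b _ => by
    rw [QIIent_comm]; ring

lemma Bnq_restrict (p q : ℕ) (v w : ℕ → ℝ) (s1 n1 s2 n2 : ℕ)
    (h1 : s1 + n1 ≤ 2*q - 2) (h2 : s2 + n2 ≤ 2*q - 2)
    (hv : ∀ b, ¬(s1 ≤ b ∧ b < s1 + n1) → v b = 0)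
    (hw : ∀ b, ¬(s2 ≤ b ∧ b < s2 + n2) → w b = 0) :
    Bnq p q v w = ∑ a ∈ Finset.range n1, ∑ b ∈ Finset.range n2,
      v (s1 + a) * ((QIIent p q (s1 + a + 1) (s2 + b + 1) : ℤ) : ℝ) * w (s2 + b) := by
  unfold Bnq
  have hsub2 : Finset.Ico s2 (s2 + n2) ⊆ Finset.range (2*q - 2) := by
    intro x hx
    rw [Finset.mem_Ico] at hx
    exact Finset.mem_range.2 (by omega)
  have hinner : ∀ a, ∑ b ∈ Finset.range (2*q - 2),
      v a * ((QIIent p q (a + 1) (b + 1) : ℤ) : ℝ) * w b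
      = ∑ b ∈ Finset.range n2,
        v a * ((QIIent p q (a + 1) (s2 + b + 1) : ℤ) : ℝ) * w (s2 + b) := by
    intro a
    rw [← Finset.sum_subset hsub2 (fun x _ hnx => by
      rw [hw x (by rw [Finset.mem_Ico] at hnx; omega)]; ring)]
    rw [Finset.sum_Ico_eq_sum_range]
    simp only [Nat.add_sub_cancel_left]
  rw [Finset.sum_congr rfl fun a _ => hinner a]
  have hsub1 : Finset.Ico s1 (s1 + n1) ⊆ Finset.range (2*q - 2) := by
    intro x hx
    rw [Finset.mem_Ico] at hx
    exact Finset.mem_range.2 (by omega)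
  rw [← Finset.sum_subset hsub1 (fun x _ hnx => Finset.sum_eq_zero fun b _ => by
    rw [hv x (by rw [Finset.mem_Ico] at hnx; omega)]; ring)]
  rw [Finset.sum_Ico_eq_sum_range]
  simp only [Nat.add_sub_cancel_left]

lemma sh_shift (s : ℕ) (f : ℕ → ℝ) (a : ℕ) : sh s f (s + a) = f a := by
  unfold sh
  rw [if_pos (Nat.le_add_right s a)]
  congr 1
  omega

lemma sh_lo (s : ℕ) (f : ℕ → ℝ) {b : ℕ} (h : b < s) : sh s f b = 0 := by
  unfold sh; rw [if_neg (by omega)]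

lemma sh_eval (s : ℕ) (f : ℕ → ℝ) {b : ℕ} (h : s ≤ b) : sh s f b = f (b - s) := by
  unfold sh; rw [if_pos h]

lemma Bnq_dd_left (p q : ℕ) (t : ℕ) (ht : t < 2*q - 2) (w : ℕ → ℝ) :
    Bnq p q (dd t) w
      = ∑ b ∈ Finset.range (2*q - 2), ((QIIent p q (t + 1) (b + 1) : ℤ) : ℝ) * w b := by
  unfold Bnq
  rw [Finset.sum_eq_single t
    (fun x _ hx => Finset.sum_eq_zero fun b _ => by
      unfold dd; rw [if_neg hx]; ring)
    (fun h => absurd (Finset.mem_range.2 ht) h)]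
  exact Finset.sum_congr rfl fun b _ => by unfold dd; rw [if_pos rfl]; ring

lemma Bnq_alpha_left {p q : ℕ} (hp : 3 ≤ p) (hq : p + 2 ≤ q) (w : ℕ → ℝ) :
    Bnq p q (dd (2*q - 4)) w = 2 * w (2*q - 4) + w (p - 3) + w (p - 2) := by
  rw [Bnq_dd_left p q (2*q - 4) (by omega) w,
    show 2*q - 4 + 1 = 2*q - 3 by omega]
  rw [Finset.sum_congr rfl fun b hb => by
    rw [Ralpha hp hq (Finset.mem_range.1 hb)]]
  have expand : ∀ b : ℕ, ((if b = 2*q - 4 then (2:ℝ) else 0) + (if b = p - 3 then 1 else 0)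
      + (if b = p - 2 then 1 else 0)) * w b
      = (if b = 2*q - 4 then 2 * w b else 0) + ((if b = p - 3 then w b else 0)
        + (if b = p - 2 then w b else 0)) := by
    intro b; split_ifs <;> ring
  rw [Finset.sum_congr rfl fun b _ => expand b, Finset.sum_add_distrib,
    Finset.sum_add_distrib,
    Finset.sum_ite_eq' (Finset.range (2*q - 2)) (2*q - 4) (fun b => 2 * w b),
    Finset.sum_ite_eq' (Finset.range (2*q - 2)) (p - 3) (fun b => w b),
    Finset.sum_ite_eq' (Finset.range (2*q - 2)) (p - 2) (fun b => w b),
    if_pos (Finset.mem_range.2 (by omega)), if_pos (Finset.mem_range.2 (by omega)),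
    if_pos (Finset.mem_range.2 (by omega))]
  ring

lemma Bnq_beta_left {p q : ℕ} (hp : 3 ≤ p) (hq : p + 2 ≤ q) (w : ℕ → ℝ) :
    Bnq p q (dd (2*q - 3)) w = w (q - 4) - w (q - 3) := by
  rw [Bnq_dd_left p q (2*q - 3) (by omega) w,
    show 2*q - 3 + 1 = 2*q - 2 by omega]
  rw [Finset.sum_congr rfl fun b hb => by
    rw [Rbeta hp hq (Finset.mem_range.1 hb)]]
  have expand : ∀ b : ℕ, ((if b = q - 4 then (1:ℝ) else 0) + (if b = q - 3 then -1 else 0)) * w b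
      = (if b = q - 4 then w b else 0) + (if b = q - 3 then -w b else 0) := by
    intro b; split_ifs <;> ring
  rw [Finset.sum_congr rfl fun b _ => expand b, Finset.sum_add_distrib,
    Finset.sum_ite_eq' (Finset.range (2*q - 2)) (q - 4) (fun b => w b),
    Finset.sum_ite_eq' (Finset.range (2*q - 2)) (q - 3) (fun b => -w b),
    if_pos (Finset.mem_range.2 (by omega)), if_pos (Finset.mem_range.2 (by omega))]
  ring

lemma Bnq_alpha_right {p q : ℕ} (hp : 3 ≤ p) (hq : p + 2 ≤ q) (v : ℕ → ℝ) :
    Bnq p q v (dd (2*q - 4)) = 2 * v (2*q - 4) + v (p - 3) + v (p - 2) := by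
  rw [Bnq_symm, Bnq_alpha_left hp hq]

lemma Bnq_beta_right {p q : ℕ} (hp : 3 ≤ p) (hq : p + 2 ≤ q) (v : ℕ → ℝ) :
    Bnq p q v (dd (2*q - 3)) = v (q - 4) - v (q - 3) := by
  rw [Bnq_symm, Bnq_beta_left hp hq]

section Pairings

variable {p q : ℕ} (hp : 3 ≤ p) (hq : p + 2 ≤ q)

include hp hq

lemma A1 (l k : ℕ) (hl : l ≤ p - 3) (hk : k ≤ p - 3) :
    Bnq p q (cc l) (cc k) = if l = k then ((k : ℝ) + 1) * ((k : ℝ) + 2) else 0 := by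
  rw [Bnq_restrict p q _ _ 0 (p - 2) 0 (p - 2) (by omega) (by omega)
    (fun b hb => cc_gt l b (by omega)) (fun b hb => cc_gt k b (by omega))]
  simp only [zero_add]
  rw [Finset.sum_congr rfl fun a ha => Finset.sum_congr rfl fun b hb => by
    rw [QB1 hp hq (Finset.mem_range.1 ha) (Finset.mem_range.1 hb)]]
  exact loc_chain_chain (p - 2) k l (by omega) (by omega)

lemma A2 (l k : ℕ) (hl : l ≤ q - p - 2) (hk : k ≤ q - p - 2) :
    Bnq p q (sh (p - 2) (cc l)) (sh (p - 2) (cc k))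
      = if l = k then ((k : ℝ) + 1) * ((k : ℝ) + 2) else 0 := by
  rw [Bnq_restrict p q _ _ (p - 2) (q - p - 1) (p - 2) (q - p - 1) (by omega) (by omega)
    (fun b hb => by
      rcases Nat.lt_or_ge b (p - 2) with h | h
      · exact sh_lo _ _ h
      · rw [sh_eval _ _ h]; exact cc_gt l _ (by omega))
    (fun b hb => by
      rcases Nat.lt_or_ge b (p - 2) with h | h
      · exact sh_lo _ _ h
      · rw [sh_eval _ _ h]; exact cc_gt k _ (by omega))]
  rw [Finset.sum_congr rfl fun a ha => Finset.sum_congr rfl fun b hb => by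
    rw [sh_shift, sh_shift, show p - 2 + a + 1 = p - 1 + a by omega,
      show p - 2 + b + 1 = p - 1 + b by omega,
      QB2 hp hq (Finset.mem_range.1 ha) (Finset.mem_range.1 hb)]]
  exact loc_chain_chain (q - p - 1) k l (by omega) (by omega)

lemma A3 (l k : ℕ) (hl : l ≤ q - 2) (hk : k ≤ q - 2) :
    Bnq p q (sh (q - 3) (cc l)) (sh (q - 3) (cc k))
      = if l = k then -(((k : ℝ) + 1) * ((k : ℝ) + 2)) else 0 := by
  rw [Bnq_restrict p q _ _ (q - 3) (q - 1) (q - 3) (q - 1) (by omega) (by omega)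
    (fun b hb => by
      rcases Nat.lt_or_ge b (q - 3) with h | h
      · exact sh_lo _ _ h
      · rw [sh_eval _ _ h]; exact cc_gt l _ (by omega))
    (fun b hb => by
      rcases Nat.lt_or_ge b (q - 3) with h | h
      · exact sh_lo _ _ h
      · rw [sh_eval _ _ h]; exact cc_gt k _ (by omega))]
  rw [Finset.sum_congr rfl fun a ha => Finset.sum_congr rfl fun b hb =>
    show sh (q-3) (cc l) (q-3+a) * ((QIIent p q (q-3+a+1) (q-3+b+1) : ℤ) : ℝ)
        * sh (q-3) (cc k) (q-3+b)
      = -(cc l a * ((triEnt (a+1) (b+1) : ℤ) : ℝ) * cc k b) from by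
    rw [sh_shift, sh_shift, show q - 3 + a + 1 = q - 2 + a by omega,
      show q - 3 + b + 1 = q - 2 + b by omega,
      QB3 hp hq (Finset.mem_range.1 ha) (Finset.mem_range.1 hb)]
    push_cast; ring]
  have hneg : ∑ a ∈ Finset.range (q - 1), ∑ b ∈ Finset.range (q - 1),
      -(cc l a * ((triEnt (a+1) (b+1) : ℤ) : ℝ) * cc k b)
      = -(∑ a ∈ Finset.range (q - 1), ∑ b ∈ Finset.range (q - 1),
        cc l a * ((triEnt (a+1) (b+1) : ℤ) : ℝ) * cc k b) := by
    simp
  rw [hneg, loc_chain_chain (q - 1) k l (by omega) (by omega)]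
  split_ifs <;> ring

omit hp hq in
lemma supp_sh_cc {s n l : ℕ} (hl : l < n) : ∀ b, ¬(s ≤ b ∧ b < s + n) → sh s (cc l) b = 0 := by
  intro b hb
  rcases Nat.lt_or_ge b s with h | h
  · exact sh_lo _ _ h
  · rw [sh_eval _ _ h]; exact cc_gt l _ (by omega)

omit hp hq in
lemma supp_sh_rr {s n : ℕ} : ∀ b, ¬(s ≤ b ∧ b < s + n) → sh s (rr n) b = 0 := by
  intro b hb
  rcases Nat.lt_or_ge b s with h | h
  · exact sh_lo _ _ h
  · rw [sh_eval _ _ h]; exact rr_ge n _ (by omega)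

lemma A4 (l : ℕ) (hl : l ≤ q - p - 2) :
    Bnq p q (sh (p - 2) (cc l)) (sh (p - 2) (rr (q - p - 1))) = (q : ℝ) - (p : ℝ) := by
  rw [Bnq_restrict p q _ _ (p - 2) (q - p - 1) (p - 2) (q - p - 1) (by omega) (by omega)
    (supp_sh_cc (by omega)) supp_sh_rr]
  rw [Finset.sum_congr rfl fun a ha => Finset.sum_congr rfl fun b hb => by
    rw [sh_shift, sh_shift, show p - 2 + a + 1 = p - 1 + a by omega,
      show p - 2 + b + 1 = p - 1 + b by omega,
      QB2 hp hq (Finset.mem_range.1 ha) (Finset.mem_range.1 hb)]]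
  rw [loc_chain_rev (q - p - 1) l (by omega),
    show q - p - 1 = q - (p + 1) by omega, Nat.cast_sub (by omega : p + 1 ≤ q)]
  push_cast; ring

lemma A5 (k : ℕ) (hk : k ≤ q - p - 2) :
    Bnq p q (sh (p - 2) (rr (q - p - 1))) (sh (p - 2) (cc k)) = (q : ℝ) - (p : ℝ) := by
  rw [Bnq_restrict p q _ _ (p - 2) (q - p - 1) (p - 2) (q - p - 1) (by omega) (by omega)
    supp_sh_rr (supp_sh_cc (by omega))]
  rw [Finset.sum_congr rfl fun a ha => Finset.sum_congr rfl fun b hb => by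
    rw [sh_shift, sh_shift, show p - 2 + a + 1 = p - 1 + a by omega,
      show p - 2 + b + 1 = p - 1 + b by omega,
      QB2 hp hq (Finset.mem_range.1 ha) (Finset.mem_range.1 hb)]]
  rw [loc_rev_chain (q - p - 1) k (by omega),
    show q - p - 1 = q - (p + 1) by omega, Nat.cast_sub (by omega : p + 1 ≤ q)]
  push_cast; ring

lemma A6 :
    Bnq p q (sh (p - 2) (rr (q - p - 1))) (sh (p - 2) (rr (q - p - 1)))
      = ((q : ℝ) - (p : ℝ) - 1) * ((q : ℝ) - (p : ℝ)) := by
  rw [Bnq_restrict p q _ _ (p - 2) (q - p - 1) (p - 2) (q - p - 1) (by omega) (by omega)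
    supp_sh_rr supp_sh_rr]
  rw [Finset.sum_congr rfl fun a ha => Finset.sum_congr rfl fun b hb => by
    rw [sh_shift, sh_shift, show p - 2 + a + 1 = p - 1 + a by omega,
      show p - 2 + b + 1 = p - 1 + b by omega,
      QB2 hp hq (Finset.mem_range.1 ha) (Finset.mem_range.1 hb)]]
  rw [loc_rev_rev (q - p - 1) (by omega),
    show q - p - 1 = q - (p + 1) by omega, Nat.cast_sub (by omega : p + 1 ≤ q)]
  push_cast; ring

lemma A7 :
    Bnq p q (sh (q - 3) (rr (q - 1))) (sh (q - 3) (rr (q - 1)))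
      = -(((q : ℝ) - 1) * (q : ℝ)) := by
  rw [Bnq_restrict p q _ _ (q - 3) (q - 1) (q - 3) (q - 1) (by omega) (by omega)
    supp_sh_rr supp_sh_rr]
  rw [Finset.sum_congr rfl fun a ha => Finset.sum_congr rfl fun b hb =>
    show sh (q-3) (rr (q-1)) (q-3+a) * ((QIIent p q (q-3+a+1) (q-3+b+1) : ℤ) : ℝ)
        * sh (q-3) (rr (q-1)) (q-3+b)
      = -(rr (q-1) a * ((triEnt (a+1) (b+1) : ℤ) : ℝ) * rr (q-1) b) from by
    rw [sh_shift, sh_shift, show q - 3 + a + 1 = q - 2 + a by omega,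
      show q - 3 + b + 1 = q - 2 + b by omega,
      QB3 hp hq (Finset.mem_range.1 ha) (Finset.mem_range.1 hb)]
    push_cast; ring]
  have hneg : ∑ a ∈ Finset.range (q - 1), ∑ b ∈ Finset.range (q - 1),
      -(rr (q-1) a * ((triEnt (a+1) (b+1) : ℤ) : ℝ) * rr (q-1) b)
      = -(∑ a ∈ Finset.range (q - 1), ∑ b ∈ Finset.range (q - 1),
        rr (q-1) a * ((triEnt (a+1) (b+1) : ℤ) : ℝ) * rr (q-1) b) := by
    simp
  rw [hneg, loc_rev_rev (q - 1) (by omega), Nat.cast_sub (by omega : 1 ≤ q)]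
  push_cast; ring

lemma ZB12 (v w : ℕ → ℝ) (hv : ∀ b, ¬(b < p - 2) → v b = 0)
    (hw : ∀ b, ¬(p - 2 ≤ b ∧ b < q - 3) → w b = 0) : Bnq p q v w = 0 := by
  rw [Bnq_restrict p q v w 0 (p - 2) (p - 2) (q - p - 1) (by omega) (by omega)
    (fun b hb => hv b (by omega)) (fun b hb => hw b (by omega))]
  refine Finset.sum_eq_zero fun a ha => Finset.sum_eq_zero fun b hb => ?_
  rw [show 0 + a + 1 = a + 1 by omega, show p - 2 + b + 1 = p - 1 + b by omega,
    Z12 hp hq (Finset.mem_range.1 ha) (Finset.mem_range.1 hb)]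
  simp

lemma ZB13 (v w : ℕ → ℝ) (hv : ∀ b, ¬(b < p - 2) → v b = 0)
    (hw : ∀ b, ¬(q - 3 ≤ b ∧ b < 2*q - 4) → w b = 0) : Bnq p q v w = 0 := by
  rw [Bnq_restrict p q v w 0 (p - 2) (q - 3) (q - 1) (by omega) (by omega)
    (fun b hb => hv b (by omega)) (fun b hb => hw b (by omega))]
  refine Finset.sum_eq_zero fun a ha => Finset.sum_eq_zero fun b hb => ?_
  rw [show 0 + a + 1 = a + 1 by omega, show q - 3 + b + 1 = q - 2 + b by omega,
    Z13 hp hq (Finset.mem_range.1 ha) (Finset.mem_range.1 hb)]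
  simp

lemma ZB23 (v w : ℕ → ℝ) (hv : ∀ b, ¬(p - 2 ≤ b ∧ b < q - 3) → v b = 0)
    (hw : ∀ b, ¬(q - 3 ≤ b ∧ b < 2*q - 4) → w b = 0) : Bnq p q v w = 0 := by
  rw [Bnq_restrict p q v w (p - 2) (q - p - 1) (q - 3) (q - 1) (by omega) (by omega)
    (fun b hb => hv b (by omega)) (fun b hb => hw b (by omega))]
  refine Finset.sum_eq_zero fun a ha => Finset.sum_eq_zero fun b hb => ?_
  rw [show p - 2 + a + 1 = p - 1 + a by omega, show q - 3 + b + 1 = q - 2 + b by omega,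
    Z23 hp hq (Finset.mem_range.1 ha) (Finset.mem_range.1 hb)]
  simp

end Pairings

lemma dd_self (t : ℕ) : dd t t = 1 := by unfold dd; rw [if_pos rfl]
lemma dd_ne {t b : ℕ} (h : b ≠ t) : dd t b = 0 := by unfold dd; rw [if_neg h]

lemma Bnq_comb3_left (p q : ℕ) (c1 c2 c3 : ℝ) (f1 f2 f3 w : ℕ → ℝ) :
    Bnq p q (fun b => c1 * f1 b + c2 * f2 b + c3 * f3 b) w
      = c1 * Bnq p q f1 w + c2 * Bnq p q f2 w + c3 * Bnq p q f3 w := by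
  unfold Bnq
  rw [Finset.sum_congr rfl fun a _ => Finset.sum_congr rfl fun b _ =>
    show (c1 * f1 a + c2 * f2 a + c3 * f3 a) * ((QIIent p q (a+1) (b+1) : ℤ):ℝ) * w b
      = c1 * (f1 a * ((QIIent p q (a+1) (b+1) : ℤ):ℝ) * w b)
        + (c2 * (f2 a * ((QIIent p q (a+1) (b+1) : ℤ):ℝ) * w b)
        + c3 * (f3 a * ((QIIent p q (a+1) (b+1) : ℤ):ℝ) * w b)) from by ring]
  simp only [Finset.sum_add_distrib, ← Finset.mul_sum]
  ring

lemma Bnq_comb6_left (p q : ℕ) (c1 c2 c3 c4 c5 c6 : ℝ) (f1 f2 f3 f4 f5 f6 w : ℕ → ℝ) :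
    Bnq p q (fun b => c1 * f1 b + c2 * f2 b + c3 * f3 b + c4 * f4 b + c5 * f5 b + c6 * f6 b) w
      = c1 * Bnq p q f1 w + c2 * Bnq p q f2 w + c3 * Bnq p q f3 w
        + c4 * Bnq p q f4 w + c5 * Bnq p q f5 w + c6 * Bnq p q f6 w := by
  unfold Bnq
  rw [Finset.sum_congr rfl fun a _ => Finset.sum_congr rfl fun b _ =>
    show (c1 * f1 a + c2 * f2 a + c3 * f3 a + c4 * f4 a + c5 * f5 a + c6 * f6 a)
          * ((QIIent p q (a+1) (b+1) : ℤ):ℝ) * w b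
      = c1 * (f1 a * ((QIIent p q (a+1) (b+1) : ℤ):ℝ) * w b)
        + (c2 * (f2 a * ((QIIent p q (a+1) (b+1) : ℤ):ℝ) * w b)
        + (c3 * (f3 a * ((QIIent p q (a+1) (b+1) : ℤ):ℝ) * w b)
        + (c4 * (f4 a * ((QIIent p q (a+1) (b+1) : ℤ):ℝ) * w b)
        + (c5 * (f5 a * ((QIIent p q (a+1) (b+1) : ℤ):ℝ) * w b)
        + c6 * (f6 a * ((QIIent p q (a+1) (b+1) : ℤ):ℝ) * w b))))) from by ring]
  simp only [Finset.sum_add_distrib, ← Finset.mul_sum]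
  ring

/-- The first extra positive vector. -/
def Xv (p q : ℕ) : ℕ → ℝ := fun b =>
  (-((q:ℝ) - (p:ℝ))) * cc (p - 3) b
    + (-((p:ℝ) - 1)) * sh (p - 2) (rr (q - p - 1)) b
    + ((p:ℝ) - 1) * ((q:ℝ) - (p:ℝ)) * dd (2*q - 4) b

/-- The second extra positive vector. -/
def Yv (p q : ℕ) : ℕ → ℝ := fun b =>
  (-(((q:ℝ) - (p:ℝ)) * (q:ℝ))) * cc (p - 3) b
    + (-(((p:ℝ) - 1) * (q:ℝ))) * sh (p - 2) (rr (q - p - 1)) b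
    + (-(((q:ℝ) - 1) * (q:ℝ))) * sh (p - 2) (cc (q - p - 2)) b
    + (-(((q:ℝ) - 1) * ((q:ℝ) - (p:ℝ)))) * sh (q - 3) (rr (q - 1)) b
    + ((p:ℝ) - 1) * ((q:ℝ) - (p:ℝ)) * (q:ℝ) * dd (2*q - 4) b
    + ((q:ℝ) - 1) * ((q:ℝ) - (p:ℝ)) * (q:ℝ) * dd (2*q - 3) b

lemma X_expand (p q : ℕ) (w : ℕ → ℝ) :
    Bnq p q (Xv p q) w
      = (-((q:ℝ) - (p:ℝ))) * Bnq p q (cc (p - 3)) w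
        + (-((p:ℝ) - 1)) * Bnq p q (sh (p - 2) (rr (q - p - 1))) w
        + ((p:ℝ) - 1) * ((q:ℝ) - (p:ℝ)) * Bnq p q (dd (2*q - 4)) w :=
  Bnq_comb3_left p q _ _ _ _ _ _ w

lemma Y_expand (p q : ℕ) (w : ℕ → ℝ) :
    Bnq p q (Yv p q) w
      = (-(((q:ℝ) - (p:ℝ)) * (q:ℝ))) * Bnq p q (cc (p - 3)) w
        + (-(((p:ℝ) - 1) * (q:ℝ))) * Bnq p q (sh (p - 2) (rr (q - p - 1))) w
        + (-(((q:ℝ) - 1) * (q:ℝ))) * Bnq p q (sh (p - 2) (cc (q - p - 2))) w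
        + (-(((q:ℝ) - 1) * ((q:ℝ) - (p:ℝ)))) * Bnq p q (sh (q - 3) (rr (q - 1))) w
        + ((p:ℝ) - 1) * ((q:ℝ) - (p:ℝ)) * (q:ℝ) * Bnq p q (dd (2*q - 4)) w
        + ((q:ℝ) - 1) * ((q:ℝ) - (p:ℝ)) * (q:ℝ) * Bnq p q (dd (2*q - 3)) w :=
  Bnq_comb6_left p q _ _ _ _ _ _ _ _ _ _ _ _ w

section XY

variable {p q : ℕ} (hp : 3 ≤ p) (hq : p + 2 ≤ q)

include hp hq

-- cross-zero instances
lemma ZC1R2 (l : ℕ) (hl : l ≤ p - 3) : Bnq p q (cc l) (sh (p - 2) (rr (q - p - 1))) = 0 :=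
  ZB12 hp hq _ _ (fun b hb => cc_gt l b (by omega))
    (fun b hb => supp_sh_rr (s := p - 2) (n := q - p - 1) b (by omega))

lemma ZC1C2 (l k : ℕ) (hl : l ≤ p - 3) (hk : k ≤ q - p - 2) :
    Bnq p q (cc l) (sh (p - 2) (cc k)) = 0 :=
  ZB12 hp hq _ _ (fun b hb => cc_gt l b (by omega))
    (fun b hb => supp_sh_cc (s := p - 2) (n := q - p - 1) (by omega) b (by omega))

lemma ZC1R3 (l : ℕ) (hl : l ≤ p - 3) : Bnq p q (cc l) (sh (q - 3) (rr (q - 1))) = 0 :=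
  ZB13 hp hq _ _ (fun b hb => cc_gt l b (by omega))
    (fun b hb => supp_sh_rr (s := q - 3) (n := q - 1) b (by omega))

lemma ZR2R3 : Bnq p q (sh (p - 2) (rr (q - p - 1))) (sh (q - 3) (rr (q - 1))) = 0 :=
  ZB23 hp hq _ _ (fun b hb => supp_sh_rr (s := p - 2) (n := q - p - 1) b (by omega))
    (fun b hb => supp_sh_rr (s := q - 3) (n := q - 1) b (by omega))

lemma ZC2R3 (k : ℕ) (hk : k ≤ q - p - 2) :
    Bnq p q (sh (p - 2) (cc k)) (sh (q - 3) (rr (q - 1))) = 0 :=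
  ZB23 hp hq _ _ (fun b hb => supp_sh_cc (s := p - 2) (n := q - p - 1) (by omega) b (by omega))
    (fun b hb => supp_sh_rr (s := q - 3) (n := q - 1) b (by omega))

lemma XC1 (k : ℕ) (hk : k ≤ p - 3) : Bnq p q (Xv p q) (cc k) = 0 := by
  rw [X_expand, A1 hp hq (p - 3) k le_rfl hk,
    Bnq_symm p q (sh (p - 2) (rr (q - p - 1))) (cc k), ZC1R2 hp hq k hk,
    Bnq_alpha_left hp hq,
    cc_gt k (2*q - 4) (by omega), cc_gt k (p - 2) (by omega)]
  rcases eq_or_ne k (p - 3) with h | h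
  · rw [if_pos h.symm, ← h, cc_le k k le_rfl, h, Nat.cast_sub (show 3 ≤ p by omega)]
    push_cast; ring
  · rw [if_neg (Ne.symm h), cc_gt k (p - 3) (by omega)]
    ring

lemma XC2 (k : ℕ) (hk : k ≤ q - p - 2) : Bnq p q (Xv p q) (sh (p - 2) (cc k)) = 0 := by
  rw [X_expand, ZC1C2 hp hq (p - 3) k le_rfl hk, A5 hp hq k hk, Bnq_alpha_left hp hq,
    sh_eval (p - 2) (cc k) (show p - 2 ≤ 2*q - 4 by omega),
    show 2*q - 4 - (p - 2) = 2*q - 2 - p by omega, cc_gt k (2*q - 2 - p) (by omega),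
    sh_lo (p - 2) (cc k) (show p - 3 < p - 2 by omega),
    sh_eval (p - 2) (cc k) (le_refl (p - 2)), show p - 2 - (p - 2) = 0 by omega,
    cc_le k 0 (Nat.zero_le k)]
  push_cast; ring

lemma XR2 : Bnq p q (Xv p q) (sh (p - 2) (rr (q - p - 1))) = 0 := by
  rw [X_expand, ZC1R2 hp hq (p - 3) le_rfl, A6 hp hq, Bnq_alpha_left hp hq,
    sh_eval (p - 2) (rr (q - p - 1)) (show p - 2 ≤ 2*q - 4 by omega),
    show 2*q - 4 - (p - 2) = 2*q - 2 - p by omega, rr_ge (q - p - 1) (2*q - 2 - p) (by omega),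
    sh_lo (p - 2) (rr (q - p - 1)) (show p - 3 < p - 2 by omega),
    sh_eval (p - 2) (rr (q - p - 1)) (le_refl (p - 2)), show p - 2 - (p - 2) = 0 by omega,
    rr_lt (q - p - 1) 0 (by omega), show q - p - 1 = q - (p + 1) by omega,
    Nat.cast_sub (show p + 1 ≤ q by omega)]
  push_cast; ring

lemma XDA : Bnq p q (Xv p q) (dd (2*q - 4)) = (q : ℝ) - 1 := by
  rw [X_expand, Bnq_alpha_right hp hq (cc (p - 3)),
    Bnq_alpha_right hp hq (sh (p - 2) (rr (q - p - 1))),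
    Bnq_alpha_left hp hq (dd (2*q - 4)),
    cc_gt (p - 3) (2*q - 4) (by omega), cc_le (p - 3) (p - 3) le_rfl,
    cc_gt (p - 3) (p - 2) (by omega),
    sh_eval (p - 2) (rr (q - p - 1)) (show p - 2 ≤ 2*q - 4 by omega),
    show 2*q - 4 - (p - 2) = 2*q - 2 - p by omega, rr_ge (q - p - 1) (2*q - 2 - p) (by omega),
    sh_lo (p - 2) (rr (q - p - 1)) (show p - 3 < p - 2 by omega),
    sh_eval (p - 2) (rr (q - p - 1)) (le_refl (p - 2)), show p - 2 - (p - 2) = 0 by omega,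
    rr_lt (q - p - 1) 0 (by omega),
    dd_self (2*q - 4), dd_ne (show p - 3 ≠ 2*q - 4 by omega),
    dd_ne (show p - 2 ≠ 2*q - 4 by omega),
    show q - p - 1 = q - (p + 1) by omega, Nat.cast_sub (show p + 1 ≤ q by omega),
    show p - 3 = p - 3 from rfl, Nat.cast_sub (show 3 ≤ p by omega)]
  push_cast; ring

lemma XX : Bnq p q (Xv p q) (Xv p q) = ((p:ℝ) - 1) * ((q:ℝ) - (p:ℝ)) * ((q:ℝ) - 1) := by
  rw [X_expand p q (Xv p q),
    Bnq_symm p q (cc (p - 3)) (Xv p q), XC1 hp hq (p - 3) le_rfl,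
    Bnq_symm p q (sh (p - 2) (rr (q - p - 1))) (Xv p q), XR2 hp hq,
    Bnq_symm p q (dd (2*q - 4)) (Xv p q), XDA hp hq]
  ring

lemma YC1 (k : ℕ) (hk : k ≤ p - 3) : Bnq p q (Yv p q) (cc k) = 0 := by
  rw [Y_expand, A1 hp hq (p - 3) k le_rfl hk,
    Bnq_symm p q (sh (p - 2) (rr (q - p - 1))) (cc k), ZC1R2 hp hq k hk,
    Bnq_symm p q (sh (p - 2) (cc (q - p - 2))) (cc k), ZC1C2 hp hq k (q - p - 2) hk le_rfl,
    Bnq_symm p q (sh (q - 3) (rr (q - 1))) (cc k), ZC1R3 hp hq k hk,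
    Bnq_alpha_left hp hq, Bnq_beta_left hp hq,
    cc_gt k (2*q - 4) (by omega), cc_gt k (p - 2) (by omega),
    cc_gt k (q - 4) (by omega), cc_gt k (q - 3) (by omega)]
  rcases eq_or_ne k (p - 3) with h | h
  · rw [if_pos h.symm, ← h, cc_le k k le_rfl, h, Nat.cast_sub (show 3 ≤ p by omega)]
    push_cast; ring
  · rw [if_neg (Ne.symm h), cc_gt k (p - 3) (by omega)]
    ring

lemma YC2 (k : ℕ) (hk : k ≤ q - p - 2) : Bnq p q (Yv p q) (sh (p - 2) (cc k)) = 0 := by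
  rw [Y_expand, ZC1C2 hp hq (p - 3) k le_rfl hk, A5 hp hq k hk,
    A2 hp hq (q - p - 2) k le_rfl hk,
    Bnq_symm p q (sh (q - 3) (rr (q - 1))) (sh (p - 2) (cc k)), ZC2R3 hp hq k hk,
    Bnq_alpha_left hp hq, Bnq_beta_left hp hq,
    sh_eval (p - 2) (cc k) (show p - 2 ≤ 2*q - 4 by omega),
    show 2*q - 4 - (p - 2) = 2*q - 2 - p by omega, cc_gt k (2*q - 2 - p) (by omega),
    sh_lo (p - 2) (cc k) (show p - 3 < p - 2 by omega),
    sh_eval (p - 2) (cc k) (le_refl (p - 2)), show p - 2 - (p - 2) = 0 by omega,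
    cc_le k 0 (Nat.zero_le k),
    sh_eval (p - 2) (cc k) (show p - 2 ≤ q - 4 by omega),
    show q - 4 - (p - 2) = q - p - 2 by omega,
    sh_eval (p - 2) (cc k) (show p - 2 ≤ q - 3 by omega),
    show q - 3 - (p - 2) = q - p - 1 by omega, cc_gt k (q - p - 1) (by omega)]
  rcases eq_or_ne k (q - p - 2) with h | h
  · rw [if_pos h.symm, ← h, cc_le k k le_rfl, h, show q - p - 2 = q - (p + 2) by omega,
      Nat.cast_sub (show p + 2 ≤ q by omega)]
    push_cast; ring
  · rw [if_neg (Ne.symm h), cc_gt k (q - p - 2) (by omega)]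
    ring

lemma YR2 : Bnq p q (Yv p q) (sh (p - 2) (rr (q - p - 1))) = 0 := by
  rw [Y_expand, ZC1R2 hp hq (p - 3) le_rfl, A6 hp hq, A4 hp hq (q - p - 2) le_rfl,
    Bnq_symm p q (sh (q - 3) (rr (q - 1))) (sh (p - 2) (rr (q - p - 1))), ZR2R3 hp hq,
    Bnq_alpha_left hp hq, Bnq_beta_left hp hq,
    sh_eval (p - 2) (rr (q - p - 1)) (show p - 2 ≤ 2*q - 4 by omega),
    show 2*q - 4 - (p - 2) = 2*q - 2 - p by omega, rr_ge (q - p - 1) (2*q - 2 - p) (by omega),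
    sh_lo (p - 2) (rr (q - p - 1)) (show p - 3 < p - 2 by omega),
    sh_eval (p - 2) (rr (q - p - 1)) (le_refl (p - 2)), show p - 2 - (p - 2) = 0 by omega,
    rr_lt (q - p - 1) 0 (by omega),
    sh_eval (p - 2) (rr (q - p - 1)) (show p - 2 ≤ q - 4 by omega),
    show q - 4 - (p - 2) = q - p - 2 by omega, rr_lt (q - p - 1) (q - p - 2) (by omega),
    sh_eval (p - 2) (rr (q - p - 1)) (show p - 2 ≤ q - 3 by omega),
    show q - 3 - (p - 2) = q - p - 1 by omega, rr_ge (q - p - 1) (q - p - 1) le_rfl,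
    show q - p - 2 = q - (p + 2) by omega, Nat.cast_sub (show p + 2 ≤ q by omega),
    show q - p - 1 = q - (p + 1) by omega, Nat.cast_sub (show p + 1 ≤ q by omega)]
  push_cast; ring

lemma YR3 : Bnq p q (Yv p q) (sh (q - 3) (rr (q - 1))) = 0 := by
  rw [Y_expand, ZC1R3 hp hq (p - 3) le_rfl, ZR2R3 hp hq, ZC2R3 hp hq (q - p - 2) le_rfl,
    A7 hp hq, Bnq_alpha_left hp hq, Bnq_beta_left hp hq,
    sh_eval (q - 3) (rr (q - 1)) (show q - 3 ≤ 2*q - 4 by omega),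
    show 2*q - 4 - (q - 3) = q - 1 by omega, rr_ge (q - 1) (q - 1) le_rfl,
    sh_lo (q - 3) (rr (q - 1)) (show p - 3 < q - 3 by omega),
    sh_lo (q - 3) (rr (q - 1)) (show p - 2 < q - 3 by omega),
    sh_lo (q - 3) (rr (q - 1)) (show q - 4 < q - 3 by omega),
    sh_eval (q - 3) (rr (q - 1)) (le_refl (q - 3)), show q - 3 - (q - 3) = 0 by omega,
    rr_lt (q - 1) 0 (by omega), Nat.cast_sub (show 1 ≤ q by omega)]
  push_cast; ring

lemma YDA : Bnq p q (Yv p q) (dd (2*q - 4)) = 0 := by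
  rw [Y_expand, Bnq_alpha_right hp hq (cc (p - 3)),
    Bnq_alpha_right hp hq (sh (p - 2) (rr (q - p - 1))),
    Bnq_alpha_right hp hq (sh (p - 2) (cc (q - p - 2))),
    Bnq_alpha_right hp hq (sh (q - 3) (rr (q - 1))),
    Bnq_alpha_left hp hq (dd (2*q - 4)), Bnq_beta_left hp hq (dd (2*q - 4)),
    cc_gt (p - 3) (2*q - 4) (by omega), cc_le (p - 3) (p - 3) le_rfl,
    cc_gt (p - 3) (p - 2) (by omega),
    sh_eval (p - 2) (rr (q - p - 1)) (show p - 2 ≤ 2*q - 4 by omega),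
    show 2*q - 4 - (p - 2) = 2*q - 2 - p by omega, rr_ge (q - p - 1) (2*q - 2 - p) (by omega),
    sh_lo (p - 2) (rr (q - p - 1)) (show p - 3 < p - 2 by omega),
    sh_eval (p - 2) (rr (q - p - 1)) (le_refl (p - 2)), show p - 2 - (p - 2) = 0 by omega,
    rr_lt (q - p - 1) 0 (by omega),
    sh_eval (p - 2) (cc (q - p - 2)) (show p - 2 ≤ 2*q - 4 by omega),
    show 2*q - 4 - (p - 2) = 2*q - 2 - p by omega, cc_gt (q - p - 2) (2*q - 2 - p) (by omega),
    sh_lo (p - 2) (cc (q - p - 2)) (show p - 3 < p - 2 by omega),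
    sh_eval (p - 2) (cc (q - p - 2)) (le_refl (p - 2)), show p - 2 - (p - 2) = 0 by omega,
    cc_le (q - p - 2) 0 (Nat.zero_le _),
    sh_eval (q - 3) (rr (q - 1)) (show q - 3 ≤ 2*q - 4 by omega),
    show 2*q - 4 - (q - 3) = q - 1 by omega, rr_ge (q - 1) (q - 1) le_rfl,
    sh_lo (q - 3) (rr (q - 1)) (show p - 3 < q - 3 by omega),
    sh_lo (q - 3) (rr (q - 1)) (show p - 2 < q - 3 by omega),
    dd_self (2*q - 4), dd_ne (show p - 3 ≠ 2*q - 4 by omega),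
    dd_ne (show p - 2 ≠ 2*q - 4 by omega),
    dd_ne (show q - 4 ≠ 2*q - 4 by omega), dd_ne (show q - 3 ≠ 2*q - 4 by omega),
    show q - p - 1 = q - (p + 1) by omega, Nat.cast_sub (show p + 1 ≤ q by omega),
    Nat.cast_sub (show 3 ≤ p by omega)]
  push_cast; ring

lemma YDB : Bnq p q (Yv p q) (dd (2*q - 3)) = (q : ℝ) - (p : ℝ) := by
  rw [Y_expand, Bnq_beta_right hp hq (cc (p - 3)),
    Bnq_beta_right hp hq (sh (p - 2) (rr (q - p - 1))),
    Bnq_beta_right hp hq (sh (p - 2) (cc (q - p - 2))),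
    Bnq_beta_right hp hq (sh (q - 3) (rr (q - 1))),
    Bnq_alpha_left hp hq (dd (2*q - 3)), Bnq_beta_left hp hq (dd (2*q - 3)),
    cc_gt (p - 3) (q - 4) (by omega), cc_gt (p - 3) (q - 3) (by omega),
    sh_eval (p - 2) (rr (q - p - 1)) (show p - 2 ≤ q - 4 by omega),
    show q - 4 - (p - 2) = q - p - 2 by omega, rr_lt (q - p - 1) (q - p - 2) (by omega),
    sh_eval (p - 2) (rr (q - p - 1)) (show p - 2 ≤ q - 3 by omega),
    show q - 3 - (p - 2) = q - p - 1 by omega, rr_ge (q - p - 1) (q - p - 1) le_rfl,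
    sh_eval (p - 2) (cc (q - p - 2)) (show p - 2 ≤ q - 4 by omega),
    show q - 4 - (p - 2) = q - p - 2 by omega, cc_le (q - p - 2) (q - p - 2) le_rfl,
    sh_eval (p - 2) (cc (q - p - 2)) (show p - 2 ≤ q - 3 by omega),
    show q - 3 - (p - 2) = q - p - 1 by omega, cc_gt (q - p - 2) (q - p - 1) (by omega),
    sh_lo (q - 3) (rr (q - 1)) (show q - 4 < q - 3 by omega),
    sh_eval (q - 3) (rr (q - 1)) (le_refl (q - 3)), show q - 3 - (q - 3) = 0 by omega,
    rr_lt (q - 1) 0 (by omega),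
    dd_ne (show 2*q - 4 ≠ 2*q - 3 by omega), dd_ne (show p - 3 ≠ 2*q - 3 by omega),
    dd_ne (show p - 2 ≠ 2*q - 3 by omega),
    dd_ne (show q - 4 ≠ 2*q - 3 by omega), dd_ne (show q - 3 ≠ 2*q - 3 by omega),
    show q - p - 2 = q - (p + 2) by omega, Nat.cast_sub (show p + 2 ≤ q by omega),
    show q - p - 1 = q - (p + 1) by omega, Nat.cast_sub (show p + 1 ≤ q by omega),
    Nat.cast_sub (show 1 ≤ q by omega)]
  push_cast; ring

lemma BXY : Bnq p q (Xv p q) (Yv p q) = 0 := by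
  rw [X_expand p q (Yv p q),
    Bnq_symm p q (cc (p - 3)) (Yv p q), YC1 hp hq (p - 3) le_rfl,
    Bnq_symm p q (sh (p - 2) (rr (q - p - 1))) (Yv p q), YR2 hp hq,
    Bnq_symm p q (dd (2*q - 4)) (Yv p q), YDA hp hq]
  ring

lemma BYY : Bnq p q (Yv p q) (Yv p q)
    = ((q:ℝ) - 1) * ((q:ℝ) - (p:ℝ))^2 * (q:ℝ) := by
  rw [Y_expand p q (Yv p q),
    Bnq_symm p q (cc (p - 3)) (Yv p q), YC1 hp hq (p - 3) le_rfl,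
    Bnq_symm p q (sh (p - 2) (rr (q - p - 1))) (Yv p q), YR2 hp hq,
    Bnq_symm p q (sh (p - 2) (cc (q - p - 2))) (Yv p q), YC2 hp hq (q - p - 2) le_rfl,
    Bnq_symm p q (sh (q - 3) (rr (q - 1))) (Yv p q), YR3 hp hq,
    Bnq_symm p q (dd (2*q - 4)) (Yv p q), YDA hp hq,
    Bnq_symm p q (dd (2*q - 3)) (Yv p q), YDB hp hq]
  ring

end XY

/-- The positive family. -/
def posF (p q t : ℕ) : ℕ → ℝ :=
  if t ≤ p - 3 then cc t
  else if t ≤ q - 4 then sh (p - 2) (cc (t - (p - 2)))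
  else if t = q - 3 then Xv p q
  else Yv p q

/-- The diagonal values of the positive family. -/
def dpos (p q t : ℕ) : ℝ :=
  if t ≤ p - 3 then ((t:ℝ) + 1) * ((t:ℝ) + 2)
  else if t ≤ q - 4 then (((t - (p - 2) : ℕ):ℝ) + 1) * (((t - (p - 2) : ℕ):ℝ) + 2)
  else if t = q - 3 then ((p:ℝ) - 1) * ((q:ℝ) - (p:ℝ)) * ((q:ℝ) - 1)
  else ((q:ℝ) - 1) * ((q:ℝ) - (p:ℝ))^2 * (q:ℝ)

section Families

variable {p q : ℕ} (hp : 3 ≤ p) (hq : p + 2 ≤ q)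

lemma posF1 {t : ℕ} (h : t ≤ p - 3) : posF p q t = cc t := by
  unfold posF; rw [if_pos h]

lemma posF2 {t : ℕ} (h1 : ¬ t ≤ p - 3) (h2 : t ≤ q - 4) :
    posF p q t = sh (p - 2) (cc (t - (p - 2))) := by
  unfold posF; rw [if_neg h1, if_pos h2]

lemma posF3 {t : ℕ} (h1 : ¬ t ≤ p - 3) (h2 : ¬ t ≤ q - 4) (h3 : t = q - 3) :
    posF p q t = Xv p q := by
  unfold posF; rw [if_neg h1, if_neg h2, if_pos h3]

lemma posF4 {t : ℕ} (h1 : ¬ t ≤ p - 3) (h2 : ¬ t ≤ q - 4) (h3 : ¬ t = q - 3) :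
    posF p q t = Yv p q := by
  unfold posF; rw [if_neg h1, if_neg h2, if_neg h3]

lemma dpos1 {t : ℕ} (h : t ≤ p - 3) : dpos p q t = ((t:ℝ) + 1) * ((t:ℝ) + 2) := by
  unfold dpos; rw [if_pos h]

lemma dpos2 {t : ℕ} (h1 : ¬ t ≤ p - 3) (h2 : t ≤ q - 4) :
    dpos p q t = (((t - (p - 2) : ℕ):ℝ) + 1) * (((t - (p - 2) : ℕ):ℝ) + 2) := by
  unfold dpos; rw [if_neg h1, if_pos h2]

lemma dpos3 {t : ℕ} (h1 : ¬ t ≤ p - 3) (h2 : ¬ t ≤ q - 4) (h3 : t = q - 3) :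
    dpos p q t = ((p:ℝ) - 1) * ((q:ℝ) - (p:ℝ)) * ((q:ℝ) - 1) := by
  unfold dpos; rw [if_neg h1, if_neg h2, if_pos h3]

lemma dpos4 {t : ℕ} (h1 : ¬ t ≤ p - 3) (h2 : ¬ t ≤ q - 4) (h3 : ¬ t = q - 3) :
    dpos p q t = ((q:ℝ) - 1) * ((q:ℝ) - (p:ℝ))^2 * (q:ℝ) := by
  unfold dpos; rw [if_neg h1, if_neg h2, if_neg h3]

include hp hq

lemma dpos_pos (t : ℕ) (ht : t < q - 1) : 0 < dpos p q t := by
  have hpr : (3:ℝ) ≤ (p:ℝ) := by exact_mod_cast hp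
  have hqr : (p:ℝ) + 2 ≤ (q:ℝ) := by exact_mod_cast hq
  unfold dpos
  split_ifs
  · positivity
  · positivity
  · have h1 : (0:ℝ) < (p:ℝ) - 1 := by linarith
    have h2 : (0:ℝ) < (q:ℝ) - (p:ℝ) := by linarith
    have h3 : (0:ℝ) < (q:ℝ) - 1 := by linarith
    exact mul_pos (mul_pos h1 h2) h3
  · have h2 : (0:ℝ) < (q:ℝ) - (p:ℝ) := by linarith
    have h3 : (0:ℝ) < (q:ℝ) - 1 := by linarith
    have h4 : (0:ℝ) < (q:ℝ) := by linarith
    positivity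

lemma horth_pos (t s : ℕ) (ht : t < q - 1) (hs : s < q - 1) :
    Bnq p q (posF p q t) (posF p q s) = if t = s then dpos p q t else 0 := by
  by_cases h1 : t ≤ p - 3
  · by_cases h2 : s ≤ p - 3
    · rw [posF1 h1, posF1 h2, A1 hp hq t s h1 h2]
      by_cases h : t = s
      · subst h; rw [if_pos rfl, if_pos rfl, dpos1 h1]
      · rw [if_neg h, if_neg h]
    · by_cases h3 : s ≤ q - 4
      · rw [posF1 h1, posF2 h2 h3, ZC1C2 hp hq t (s - (p - 2)) h1 (by omega),
          if_neg (by omega)]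
      · by_cases h4 : s = q - 3
        · rw [posF1 h1, posF3 h2 h3 h4, Bnq_symm, XC1 hp hq t h1, if_neg (by omega)]
        · rw [posF1 h1, posF4 h2 h3 h4, Bnq_symm, YC1 hp hq t h1, if_neg (by omega)]
  · by_cases h2 : t ≤ q - 4
    · -- t in category 2
      by_cases h3 : s ≤ p - 3
      · rw [posF2 h1 h2, posF1 h3, Bnq_symm, ZC1C2 hp hq s (t - (p - 2)) h3 (by omega),
          if_neg (by omega)]
      · by_cases h4 : s ≤ q - 4
        · rw [posF2 h1 h2, posF2 h3 h4, A2 hp hq (t - (p - 2)) (s - (p - 2))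
            (by omega) (by omega)]
          by_cases h : t = s
          · subst h; rw [if_pos rfl, if_pos rfl, dpos2 h1 h2]
          · rw [if_neg (show ¬ (t - (p - 2) = s - (p - 2)) by omega), if_neg h]
        · by_cases h5 : s = q - 3
          · rw [posF2 h1 h2, posF3 h3 h4 h5, Bnq_symm, XC2 hp hq (t - (p - 2)) (by omega),
              if_neg (by omega)]
          · rw [posF2 h1 h2, posF4 h3 h4 h5, Bnq_symm, YC2 hp hq (t - (p - 2)) (by omega),
              if_neg (by omega)]
    · by_cases h3 : t = q - 3
      · -- t = X
        by_cases h4 : s ≤ p - 3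
        · rw [posF3 h1 h2 h3, posF1 h4, XC1 hp hq s h4, if_neg (by omega)]
        · by_cases h5 : s ≤ q - 4
          · rw [posF3 h1 h2 h3, posF2 h4 h5, XC2 hp hq (s - (p - 2)) (by omega),
              if_neg (by omega)]
          · by_cases h6 : s = q - 3
            · rw [posF3 h1 h2 h3, posF3 h4 h5 h6, XX hp hq, if_pos (by omega),
                dpos3 h1 h2 h3]
            · rw [posF3 h1 h2 h3, posF4 h4 h5 h6, BXY hp hq, if_neg (by omega)]
      · -- t = Y (t = q - 2)
        by_cases h4 : s ≤ p - 3
        · rw [posF4 h1 h2 h3, posF1 h4, YC1 hp hq s h4, if_neg (by omega)]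
        · by_cases h5 : s ≤ q - 4
          · rw [posF4 h1 h2 h3, posF2 h4 h5, YC2 hp hq (s - (p - 2)) (by omega),
              if_neg (by omega)]
          · by_cases h6 : s = q - 3
            · rw [posF4 h1 h2 h3, posF3 h4 h5 h6, Bnq_symm, BXY hp hq, if_neg (by omega)]
            · rw [posF4 h1 h2 h3, posF4 h4 h5 h6, BYY hp hq, if_pos (by omega),
                dpos4 h1 h2 h3]

lemma horth_neg (t s : ℕ) (ht : t < q - 1) (hs : s < q - 1) :
    Bnq p q (sh (q - 3) (cc t)) (sh (q - 3) (cc s))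
      = if t = s then -(((t:ℝ) + 1) * ((t:ℝ) + 2)) else 0 := by
  rw [A3 hp hq t s (by omega) (by omega)]
  by_cases h : t = s
  · subst h; rw [if_pos rfl]
  · rw [if_neg h, if_neg h]

end Families


/-- The bilinear form of a matrix, as an explicit double sum. -/
def Bform {n : ℕ} (M : Matrix (Fin n) (Fin n) ℝ) (v w : Fin n → ℝ) : ℝ :=
  ∑ a, ∑ b, v a * M a b * w b

lemma dot_eq_Bform {n : ℕ} (M : Matrix (Fin n) (Fin n) ℝ) (v w : Fin n → ℝ) :
    v ⬝ᵥ M.mulVec w = Bform M v w := by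
  simp [Bform, dotProduct, Matrix.mulVec, Finset.mul_sum, mul_assoc]

lemma Bform_add_left {n : ℕ} (M : Matrix (Fin n) (Fin n) ℝ) (u v w : Fin n → ℝ) :
    Bform M (u + v) w = Bform M u w + Bform M v w := by
  simp [Bform, add_mul, Finset.sum_add_distrib]

lemma Bform_smul_left {n : ℕ} (M : Matrix (Fin n) (Fin n) ℝ) (c : ℝ) (v w : Fin n → ℝ) :
    Bform M (c • v) w = c * Bform M v w := by
  simp [Bform, Finset.mul_sum, mul_assoc]

/-- Bform as a linear map in the first argument. -/
noncomputable def BformL {n : ℕ} (M : Matrix (Fin n) (Fin n) ℝ) (w : Fin n → ℝ) :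
    (Fin n → ℝ) →ₗ[ℝ] ℝ where
  toFun v := Bform M v w
  map_add' u v := Bform_add_left M u v w
  map_smul' c v := Bform_smul_left M c v w

lemma Bform_sum_left {n k : ℕ} (M : Matrix (Fin n) (Fin n) ℝ) (v : Fin k → Fin n → ℝ)
    (c : Fin k → ℝ) (w : Fin n → ℝ) :
    Bform M (∑ j, c j • v j) w = ∑ j, c j * Bform M (v j) w := by
  have h := map_sum (BformL M w) (fun j => c j • v j) Finset.univ
  rw [show Bform M (∑ j, c j • v j) w = BformL M w (∑ j, c j • v j) from rfl, h]
  exact Finset.sum_congr rfl fun j _ => by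
    rw [show BformL M w (c j • v j) = Bform M (c j • v j) w from rfl, Bform_smul_left]

lemma Bform_comm_swap {n : ℕ} (M : Matrix (Fin n) (Fin n) ℝ) (v w : Fin n → ℝ) :
    Bform M v w = Bform M.transpose w v := by
  rw [Bform, Bform, Finset.sum_comm]
  simp only [Matrix.transpose_apply]
  congr 1; ext a; congr 1; ext b; ring

lemma Bform_sum_right {n k : ℕ} (M : Matrix (Fin n) (Fin n) ℝ) (v : Fin k → Fin n → ℝ)
    (c : Fin k → ℝ) (w : Fin n → ℝ) :
    Bform M w (∑ j, c j • v j) = ∑ j, c j * Bform M w (v j) := by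
  rw [Bform_comm_swap, Bform_sum_left]
  exact Finset.sum_congr rfl fun j _ => by
    rw [Bform_comm_swap, Matrix.transpose_transpose]

/-- Core inertia bound: if the quadratic form of `M` is represented by coefficients `lam`
against linear functionals `u i ⬝ᵥ ·`, all `lam` outside `S` are nonpositive, and there is a
`k`-dimensional family on which the form is positive-diagonal, then `k ≤ S.card`. -/
lemma core_inertia {n k : ℕ} (M : Matrix (Fin n) (Fin n) ℝ) (lam : Fin n → ℝ)
    (u : Fin n → Fin n → ℝ)
    (hrep : ∀ x : Fin n → ℝ, x ⬝ᵥ M.mulVec x = ∑ i, lam i * (u i ⬝ᵥ x) ^ 2)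
    (S : Finset (Fin n)) (hS : ∀ i, i ∉ S → lam i ≤ 0)
    (v : Fin k → Fin n → ℝ) (d : Fin k → ℝ) (hd : ∀ i, 0 < d i)
    (horth : ∀ i j, v i ⬝ᵥ M.mulVec (v j) = if i = j then d i else 0) :
    k ≤ S.card := by
  -- the linear map c ↦ (i ∈ S ↦ u i ⬝ᵥ ∑ j, c j • v j)
  classical
  let F : (Fin k → ℝ) →ₗ[ℝ] (↥S → ℝ) :=
    { toFun := fun c => fun i => (u i.1) ⬝ᵥ (∑ j, c j • v j)
      map_add' := by
        intro c c'; funext i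
        simp [add_smul, Finset.sum_add_distrib, dotProduct_add]
      map_smul' := by
        intro r c; funext i
        have : ∑ x, (r * c x) • v x = r • ∑ x, c x • v x := by
          rw [Finset.smul_sum]
          exact Finset.sum_congr rfl fun x _ => (smul_smul r (c x) (v x)).symm
        simp only [smul_eq_mul, Pi.smul_apply]
        rw [this, dotProduct_smul]
        simp }
  have hFinj : Function.Injective F := by
    rw [← LinearMap.ker_eq_bot, LinearMap.ker_eq_bot']
    intro c hc
    by_contra hc0
    obtain ⟨j0, hj0⟩ : ∃ j0, c j0 ≠ 0 := by
      by_contra h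
      push_neg at h
      exact hc0 (funext h)
    set x : Fin n → ℝ := ∑ j, c j • v j with hx
    -- the quadratic value is positive
    have hquad : x ⬝ᵥ M.mulVec x = ∑ j, d j * (c j) ^ 2 := by
      rw [dot_eq_Bform, hx, Bform_sum_left]
      have : ∀ j, c j * Bform M (v j) (∑ j', c j' • v j') = d j * (c j) ^ 2 := by
        intro j
        rw [Bform_sum_right]
        have : ∀ j', c j' * Bform M (v j) (v j') = if j' = j then d j * c j else 0 := by
          intro j'
          rw [← dot_eq_Bform, horth]
          by_cases h : j = j'
          · subst h; simp [mul_comm]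
          · simp [h, Ne.symm h]
        rw [Finset.sum_congr rfl fun j' _ => this j', Finset.sum_ite_eq' Finset.univ j
          (fun _ => d j * c j)]
        simp; ring
      rw [Finset.sum_congr rfl fun j _ => this j]
    have hpos : 0 < x ⬝ᵥ M.mulVec x := by
      rw [hquad]
      have h1 : ∀ j ∈ Finset.univ (α := Fin k), 0 ≤ d j * (c j) ^ 2 :=
        fun j _ => mul_nonneg (hd j).le (sq_nonneg _)
      have h2 : 0 < d j0 * (c j0) ^ 2 :=
        mul_pos (hd j0) (by positivity)
      calc (0:ℝ) < d j0 * (c j0) ^ 2 := h2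
        _ ≤ ∑ j, d j * (c j) ^ 2 := Finset.single_le_sum h1 (Finset.mem_univ j0)
    have hnonpos : x ⬝ᵥ M.mulVec x ≤ 0 := by
      rw [hrep x]
      apply Finset.sum_nonpos
      intro i _
      by_cases hi : i ∈ S
      · have : u i ⬝ᵥ x = 0 := by
          have := congrFun hc ⟨i, hi⟩
          simpa [F] using this
        rw [this]; simp
      · exact mul_nonpos_of_nonpos_of_nonneg (hS i hi) (sq_nonneg _)
    linarith
  calc k = Module.finrank ℝ (Fin k → ℝ) := by simp [Module.finrank_pi]
    _ ≤ Module.finrank ℝ (↥S → ℝ) := LinearMap.finrank_le_finrank_of_injective hFinj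
    _ = S.card := by simp [Module.finrank_pi, Fintype.card_coe]

/-- Spectral representation of the quadratic form of a real symmetric matrix. -/
lemma exists_rep {n : ℕ} {M : Matrix (Fin n) (Fin n) ℝ} (hM : M.IsHermitian) :
    ∃ u : Fin n → Fin n → ℝ,
      ∀ x : Fin n → ℝ, x ⬝ᵥ M.mulVec x = ∑ i, hM.eigenvalues i * (u i ⬝ᵥ x) ^ 2 := by
  classical
  set U : Matrix (Fin n) (Fin n) ℝ := (hM.eigenvectorUnitary : Matrix (Fin n) (Fin n) ℝ) with hU
  refine ⟨fun i => fun j => U j i, fun x => ?_⟩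
  have hst : star U = U.transpose := by
    ext i j; simp [Matrix.star_apply]
  conv_lhs => rw [hM.spectral_theorem, Unitary.conjStarAlgAut_apply, ← hU]
  rw [← Matrix.mulVec_mulVec, ← Matrix.mulVec_mulVec, Matrix.dotProduct_mulVec]
  have hw : x ᵥ* U = fun i => (fun j => U j i) ⬝ᵥ x := by
    funext i
    simp only [Matrix.vecMul, dotProduct]
    exact Finset.sum_congr rfl fun _ _ => mul_comm _ _
  have hw2 : (star U) *ᵥ x = fun i => (fun j => U j i) ⬝ᵥ x := by
    funext i
    rw [hst]
    simp [Matrix.mulVec, dotProduct, Matrix.transpose_apply]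
  rw [hw, hw2]
  set w : Fin n → ℝ := fun i => (fun j => U j i) ⬝ᵥ x with hwdef
  have : (diagonal (RCLike.ofReal ∘ hM.eigenvalues) : Matrix (Fin n) (Fin n) ℝ) *ᵥ w
      = fun i => hM.eigenvalues i * w i := by
    funext i
    rw [Matrix.mulVec_diagonal]
    simp
  rw [this]
  simp only [hwdef, dotProduct]
  exact Finset.sum_congr rfl fun i _ => by ring

lemma dot_eq_Bnq (p q : ℕ) (v w : ℕ → ℝ) :
    (fun i : Fin (2*q - 2) => v i.val) ⬝ᵥ
        (((QI_I p q).map (Int.cast : ℤ → ℝ)).mulVec (fun i : Fin (2*q - 2) => w i.val))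
      = Bnq p q v w := by
  unfold Bnq
  rw [← Fin.sum_univ_eq_sum_range (fun a => ∑ b ∈ Finset.range (2*q - 2),
    v a * ((QIIent p q (a + 1) (b + 1) : ℤ) : ℝ) * w b) (2*q - 2)]
  refine Finset.sum_congr rfl fun i _ => ?_
  rw [← Fin.sum_univ_eq_sum_range (fun b =>
    v i.val * ((QIIent p q (i.val + 1) (b + 1) : ℤ) : ℝ) * w b) (2*q - 2)]
  show v i.val * (∑ j : Fin (2*q - 2),
      ((QIIent p q (i.val + 1) (j.val + 1) : ℤ) : ℝ) * w j.val) = _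
  rw [Finset.mul_sum]
  exact Finset.sum_congr rfl fun j _ => by ring

theorem QI_I_eigenvalue_counts (p q : ℕ) (hp : 3 ≤ p) (hq : p + 2 ≤ q)
    (hM : ((QI_I p q).map (Int.cast : ℤ → ℝ)).IsHermitian) :
    (Finset.univ.filter (fun i => 0 < hM.eigenvalues i)).card = q - 1 ∧
    (Finset.univ.filter (fun i => hM.eigenvalues i < 0)).card = q - 1 := by
  classical
  obtain ⟨u, hu⟩ := exists_rep hM
  set M := ((QI_I p q).map (Int.cast : ℤ → ℝ)) with hMdef
  -- positive family
  have hposcard : q - 1 ≤ (Finset.univ.filter (fun i => 0 < hM.eigenvalues i)).card := by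
    refine core_inertia M hM.eigenvalues u hu _ (fun i hi => ?_)
      (fun t i => posF p q t.val i.val) (fun t => dpos p q t.val)
      (fun t => dpos_pos hp hq t.val t.isLt) (fun i j => ?_)
    · rw [Finset.mem_filter] at hi
      push_neg at hi
      exact hi (Finset.mem_univ i)
    · have e : (fun x : Fin (2*q - 2) => posF p q i.val x.val) ⬝ᵥ
          M.mulVec (fun x : Fin (2*q - 2) => posF p q j.val x.val)
          = Bnq p q (posF p q i.val) (posF p q j.val) :=
        dot_eq_Bnq p q (posF p q i.val) (posF p q j.val)
      rw [e, horth_pos hp hq i.val j.val i.isLt j.isLt]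
      by_cases h : i = j
      · subst h; rw [if_pos rfl, if_pos rfl]
      · rw [if_neg (fun hv => h (Fin.ext hv)), if_neg h]
  -- negative family, applied to -M
  have hMneg : ∀ x : Fin (2*q - 2) → ℝ,
      x ⬝ᵥ (-M).mulVec x = ∑ i, (-(hM.eigenvalues i)) * (u i ⬝ᵥ x) ^ 2 := by
    intro x
    rw [Matrix.neg_mulVec, dotProduct_neg, hu x, ← Finset.sum_neg_distrib]
    exact Finset.sum_congr rfl fun i _ => by ring
  have hnegcard : q - 1 ≤ (Finset.univ.filter (fun i => hM.eigenvalues i < 0)).card := by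
    refine core_inertia (-M) (fun i => -(hM.eigenvalues i)) u hMneg _ (fun i hi => ?_)
      (fun t x => sh (q - 3) (cc t.val) x.val)
      (fun t => ((t.val:ℝ) + 1) * ((t.val:ℝ) + 2))
      (fun t => by positivity) (fun i j => ?_)
    · rw [Finset.mem_filter] at hi
      push_neg at hi
      have := hi (Finset.mem_univ i)
      simp only [neg_nonpos]
      exact this
    · have e : (fun x : Fin (2*q - 2) => sh (q - 3) (cc i.val) x.val) ⬝ᵥ
          M.mulVec (fun x : Fin (2*q - 2) => sh (q - 3) (cc j.val) x.val)
          = Bnq p q (sh (q - 3) (cc i.val)) (sh (q - 3) (cc j.val)) :=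
        dot_eq_Bnq p q _ _
      rw [Matrix.neg_mulVec, dotProduct_neg, e,
        horth_neg hp hq i.val j.val i.isLt j.isLt]
      by_cases h : i = j
      · subst h; rw [if_pos rfl, if_pos rfl]; ring
      · rw [if_neg (fun hv => h (Fin.ext hv)), if_neg h]; ring
  -- the two filters are disjoint and live inside Fin (2q-2)
  have hdisj : Disjoint (Finset.univ.filter (fun i => 0 < hM.eigenvalues i))
      (Finset.univ.filter (fun i => hM.eigenvalues i < 0)) := by
    rw [Finset.disjoint_filter]
    intro x _ h1 h2
    linarith
  have hsum : (Finset.univ.filter (fun i => 0 < hM.eigenvalues i)).card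
      + (Finset.univ.filter (fun i => hM.eigenvalues i < 0)).card ≤ 2*q - 2 := by
    calc (Finset.univ.filter (fun i => 0 < hM.eigenvalues i)).card
          + (Finset.univ.filter (fun i => hM.eigenvalues i < 0)).card
        = ((Finset.univ.filter (fun i => 0 < hM.eigenvalues i))
            ∪ (Finset.univ.filter (fun i => hM.eigenvalues i < 0))).card :=
          (Finset.card_union_of_disjoint hdisj).symm
      _ ≤ (Finset.univ : Finset (Fin (2*q - 2))).card :=
          Finset.card_le_card (Finset.subset_univ _)
      _ = 2*q - 2 := by simp
  exact ⟨by omega, by omega⟩
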